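/- arXiv:1010.0380 — 3 statements merged into one kernel-verified Lean document; each statement's English description precedes it below -/
import Mathlib

section
/- Let V be a matrix ordered operator space and Ṽ = V ⊕ ℂ its Werner unitization. If T : V → W is a completely contractive, completely positive linear map between matrix ordered operator spaces, then the unitization T̃ : Ṽ → W̃ defined by T̃(x + λ·1) = T(x) + λ·1 is a unital completely positive map of operator systems. -/
open scoped TensorProduct Kronecker ComplexOrder Matrix

noncomputable section

/-- Conjugation `α X α*` of an operator-valued matrix by a scalar matrix. -/
def mconj {V : Type} [AddCommGroup V] [Module ℂ V] {m n : Type} [Fintype m]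
    (α : Matrix n m ℂ) (X : Matrix m m V) : Matrix n n V :=
  Matrix.of fun i j => ∑ k, ∑ l, (α i k * star (α j l)) • X k l

/-- Entrywise star (conjugate transpose) of an operator-valued matrix. -/
def mstar {V : Type} [AddCommGroup V] [StarAddMonoid V] {m n : Type}
    (X : Matrix m n V) : Matrix n m V :=
  Matrix.of fun i j => star (X j i)

/-- An abstract operator system: a matrix ordered complex ∗-vector space with an
Archimedean matrix order unit (Choi–Effros). -/
structure OpSys (V : Type) [AddCommGroup V] [Module ℂ V] [StarAddMonoid V]
    [StarModule ℂ V] : Type 1 where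
  pos : ∀ (ι : Type) [Fintype ι] [DecidableEq ι], Set (Matrix ι ι V)
  unit : V
  unit_star : star unit = unit
  pos_star : ∀ (ι : Type) [Fintype ι] [DecidableEq ι] (X : Matrix ι ι V),
    X ∈ pos ι → mstar X = X
  pos_add : ∀ (ι : Type) [Fintype ι] [DecidableEq ι] (X Y : Matrix ι ι V),
    X ∈ pos ι → Y ∈ pos ι → X + Y ∈ pos ι
  pos_conj : ∀ (ι κ : Type) [Fintype ι] [DecidableEq ι] [Fintype κ] [DecidableEq κ]
    (α : Matrix κ ι ℂ) (X : Matrix ι ι V), X ∈ pos ι → mconj α X ∈ pos κ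
  unit_pos : ∀ (ι : Type) [Fintype ι] [DecidableEq ι],
    Matrix.diagonal (fun _ => unit) ∈ pos ι
  archimedean : ∀ (ι : Type) [Fintype ι] [DecidableEq ι] (X : Matrix ι ι V),
    mstar X = X →
    (∀ ε : ℝ, 0 < ε → X + (ε : ℂ) • Matrix.diagonal (fun _ => unit) ∈ pos ι) →
    X ∈ pos ι
  order_unit : ∀ (ι : Type) [Fintype ι] [DecidableEq ι] (X : Matrix ι ι V),
    mstar X = X → ∃ r : ℝ, 0 < r ∧
      (r : ℂ) • Matrix.diagonal (fun _ => unit) - X ∈ pos ι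
  proper : ∀ x : V, Matrix.of (fun _ _ : Fin 1 => x) ∈ pos (Fin 1) →
    Matrix.of (fun _ _ : Fin 1 => -x) ∈ pos (Fin 1) → x = 0

variable {V W : Type}

/-- The matrix norms of an operator system, described as a predicate `‖X‖ ≤ r`,
determined by the order structure via `2×2` block matrices. -/
def OpSys.normLE [AddCommGroup V] [Module ℂ V] [StarAddMonoid V] [StarModule ℂ V]
    (𝒮 : OpSys V) {ι κ : Type} [Fintype ι] [DecidableEq ι] [Fintype κ] [DecidableEq κ]
    (X : Matrix ι κ V) (r : ℝ) : Prop :=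
  Matrix.fromBlocks ((r : ℂ) • Matrix.diagonal (fun _ => 𝒮.unit)) X (mstar X)
    ((r : ℂ) • Matrix.diagonal (fun _ => 𝒮.unit)) ∈ 𝒮.pos (ι ⊕ κ)

/-- The norm of a single element of an operator system. -/
def OpSys.elemNormLE [AddCommGroup V] [Module ℂ V] [StarAddMonoid V] [StarModule ℂ V]
    (𝒮 : OpSys V) (x : V) (r : ℝ) : Prop :=
  𝒮.normLE (Matrix.of fun _ _ : Fin 1 => x) r

/-- Completeness of the norm of an operator system. -/
def OpSys.CompleteNorms [AddCommGroup V] [Module ℂ V] [StarAddMonoid V] [StarModule ℂ V]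
    (𝒮 : OpSys V) : Prop :=
  ∀ u : ℕ → V,
    (∀ ε : ℝ, 0 < ε → ∃ N : ℕ, ∀ p ≥ N, ∀ q ≥ N, 𝒮.elemNormLE (u p - u q) ε) →
    ∃ x : V, ∀ ε : ℝ, 0 < ε → ∃ N : ℕ, ∀ p ≥ N, 𝒮.elemNormLE (u p - x) ε

section Maps

variable [AddCommGroup V] [Module ℂ V] [StarAddMonoid V] [StarModule ℂ V]
variable [AddCommGroup W] [Module ℂ W] [StarAddMonoid W] [StarModule ℂ W]

/-- Completely positive map between operator systems. -/
def IsCPmap (𝒮 : OpSys V) (𝒯 : OpSys W) (Φ : V →ₗ[ℂ] W) : Prop :=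
  ∀ (ι : Type) [Fintype ι] [DecidableEq ι], ∀ X ∈ 𝒮.pos ι, X.map Φ ∈ 𝒯.pos ι

/-- Unital completely positive map between operator systems. -/
def IsUCPmap (𝒮 : OpSys V) (𝒯 : OpSys W) (Φ : V →ₗ[ℂ] W) : Prop :=
  Φ 𝒮.unit = 𝒯.unit ∧ IsCPmap 𝒮 𝒯 Φ

/-- (Unital) complete order embedding between operator systems. -/
def IsCOEmbedding (𝒮 : OpSys V) (𝒯 : OpSys W) (Φ : V →ₗ[ℂ] W) : Prop :=
  Φ 𝒮.unit = 𝒯.unit ∧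
  ∀ (ι : Type) [Fintype ι] [DecidableEq ι], ∀ X : Matrix ι ι V,
    X ∈ 𝒮.pos ι ↔ X.map Φ ∈ 𝒯.pos ι

/-- Complete order quotient map between operator systems: a unital completely positive
surjection such that every positive `Q` admits, for every `ε > 0`, a lift `P` with
`P + ε Iₙ ⊗ 1` positive. -/
def IsCOQuotientMap (𝒮 : OpSys V) (𝒯 : OpSys W) (Φ : V →ₗ[ℂ] W) : Prop :=
  IsUCPmap 𝒮 𝒯 Φ ∧ Function.Surjective Φ ∧
  ∀ (ι : Type) [Fintype ι] [DecidableEq ι], ∀ Q ∈ 𝒯.pos ι, ∀ ε : ℝ, 0 < ε →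
    ∃ P : Matrix ι ι V,
      P + (ε : ℂ) • Matrix.diagonal (fun _ => 𝒮.unit) ∈ 𝒮.pos ι ∧ P.map Φ = Q

end Maps

section Tensor

variable [AddCommGroup V] [Module ℂ V] [AddCommGroup W] [Module ℂ W]

/-- Elementary tensor of operator-valued matrices. -/
def tkron {ι κ : Type} (P : Matrix ι ι V) (Q : Matrix κ κ W) :
    Matrix (ι × κ) (ι × κ) (V ⊗[ℂ] W) :=
  Matrix.of fun p q => P p.1 q.1 ⊗ₜ[ℂ] Q p.2 q.2

/-- The cone `D_n^{max}` : all `α (P ⊗ Q) α*`. -/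
def Dmax (posV : ∀ (ι : Type) [Fintype ι] [DecidableEq ι], Set (Matrix ι ι V))
    (posW : ∀ (ι : Type) [Fintype ι] [DecidableEq ι], Set (Matrix ι ι W))
    (ι : Type) [Fintype ι] [DecidableEq ι] : Set (Matrix ι ι (V ⊗[ℂ] W)) :=
  { Z | ∃ (k l : ℕ) (P : Matrix (Fin k) (Fin k) V) (Q : Matrix (Fin l) (Fin l) W)
      (α : Matrix ι (Fin k × Fin l) ℂ),
      P ∈ posV (Fin k) ∧ Q ∈ posW (Fin l) ∧ Z = mconj α (tkron P Q) }

/-- The positive cones of the maximal operator system tensor product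
(the Archimedeanization of `D^{max}`). -/
def maxPos (posV : ∀ (ι : Type) [Fintype ι] [DecidableEq ι], Set (Matrix ι ι V)) (uV : V)
    (posW : ∀ (ι : Type) [Fintype ι] [DecidableEq ι], Set (Matrix ι ι W)) (uW : W)
    (ι : Type) [Fintype ι] [DecidableEq ι] : Set (Matrix ι ι (V ⊗[ℂ] W)) :=
  { Z | ∀ ε : ℝ, 0 < ε →
      Z + (ε : ℂ) • Matrix.diagonal (fun _ => uV ⊗ₜ[ℂ] uW) ∈ Dmax posV posW ι }

/-- The ground level positive cone of the maximal tensor product. -/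
def maxPos1 (posV : ∀ (ι : Type) [Fintype ι] [DecidableEq ι], Set (Matrix ι ι V)) (uV : V)
    (posW : ∀ (ι : Type) [Fintype ι] [DecidableEq ι], Set (Matrix ι ι W)) (uW : W) :
    Set (V ⊗[ℂ] W) :=
  { z | Matrix.of (fun _ _ : Fin 1 => z) ∈ maxPos posV uV posW uW (Fin 1) }

end Tensor

/-- Positivity in matrix algebras over a (C*-)algebra: elements of the form `Y* Y`. -/
def cstarPos {A : Type} [Ring A] [StarRing A] (ι : Type) [Fintype ι] :
    Set (Matrix ι ι A) :=
  { X | ∃ Y : Matrix ι ι A, X = Yᴴ * Y }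

/-- The dual space of an operator system. -/
abbrev DualV (V : Type) [AddCommGroup V] [Module ℂ V] := V →ₗ[ℂ] ℂ

/-- The double dual space. -/
abbrev BiDual (V : Type) [AddCommGroup V] [Module ℂ V] := DualV (DualV V)

section Dual

variable [AddCommGroup V] [Module ℂ V]

/-- Pairing of a matrix of functionals with an operator-valued matrix. -/
def ampMat {ι κ m : Type} (f : Matrix ι κ (DualV V)) (X : Matrix m m V) :
    Matrix (m × ι) (m × κ) ℂ :=
  Matrix.of fun p q => f p.2 q.2 (X p.1 q.1)

/-- The matrix ordering on the dual space: `Mₙ(S*)⁺ = CP(S, Mₙ)`. -/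
def dualPos (posV : ∀ (ι : Type) [Fintype ι] [DecidableEq ι], Set (Matrix ι ι V))
    (ι : Type) [Fintype ι] [DecidableEq ι] : Set (Matrix ι ι (DualV V)) :=
  { f | ∀ (m : Type) [Fintype m] [DecidableEq m], ∀ X ∈ posV m, (ampMat f X).PosSemidef }

/-- The matrix ordering on the double dual. -/
def bidualPos (posV : ∀ (ι : Type) [Fintype ι] [DecidableEq ι], Set (Matrix ι ι V))
    (ι : Type) [Fintype ι] [DecidableEq ι] : Set (Matrix ι ι (BiDual V)) :=
  { F | ∀ (κ : Type) [Fintype κ] [DecidableEq κ], ∀ f ∈ dualPos posV κ,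
      (Matrix.of fun (p q : ι × κ) => F p.1 q.1 (f p.2 q.2)).PosSemidef }

end Dual

/-- `‖M‖ ≤ r` for scalar matrices, via positivity of a `2×2` block matrix. -/
def cNormLE {ι κ : Type} [Fintype ι] [DecidableEq ι] [Fintype κ] [DecidableEq κ]
    (M : Matrix ι κ ℂ) (r : ℝ) : Prop :=
  (Matrix.fromBlocks ((r : ℂ) • 1) M Mᴴ ((r : ℂ) • 1)).PosSemidef

section DualNorm

/-- The matrix norm data of an operator system, in partially applicable form. -/
def OpSys.normData [AddCommGroup V] [Module ℂ V] [StarAddMonoid V] [StarModule ℂ V]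
    (𝒮 : OpSys V) (ι κ : Type) [Fintype ι] [DecidableEq ι] [Fintype κ] [DecidableEq κ] :
    Matrix ι κ V → ℝ → Prop :=
  fun X r => 𝒮.normLE X r

/-- The matrix cones of matrices over a C*-algebra, in partially applicable form. -/
def cstarPosData (A : Type) [Ring A] [StarRing A]
    (ι : Type) [Fintype ι] [DecidableEq ι] : Set (Matrix ι ι A) :=
  cstarPos ι

/-- The completely bounded norm (as a predicate `‖f‖_cb ≤ r`) on matrices over the
dual of a space with matrix norm data `normV`; this is the operator space dual
matrix norm. -/
def dualNormLE [AddCommGroup V] [Module ℂ V]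
    (normV : ∀ (ι κ : Type) [Fintype ι] [DecidableEq ι] [Fintype κ] [DecidableEq κ],
      Matrix ι κ V → ℝ → Prop)
    (ι κ : Type) [Fintype ι] [DecidableEq ι] [Fintype κ] [DecidableEq κ]
    (f : Matrix ι κ (DualV V)) (r : ℝ) : Prop :=
  ∀ (m : Type) [Fintype m] [DecidableEq m], ∀ X : Matrix m m V,
    normV m m X 1 → cNormLE (ampMat f X) r

end DualNorm

section Werner

variable {U : Type} [AddCommGroup U] [Module ℂ U]

/-- Werner's unitization cone on `U ⊕ ℂ` for a matrix ordered operator space `U`,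
given by the matrix cones `posU` and matrix norms `normU` of `U` :
`X + A ∈ Mₙ(Ũ)⁺` iff `A ∈ Mₙ⁺` and
`φ((A+εIₙ)^{-1/2} X (A+εIₙ)^{-1/2}) ≥ -1` for every `ε > 0` and every positive
contractive functional `φ` on `Mₙ(U)`. -/
def wernerPos (posU : ∀ (ι : Type) [Fintype ι] [DecidableEq ι], Set (Matrix ι ι U))
    (normU : ∀ (ι κ : Type) [Fintype ι] [DecidableEq ι] [Fintype κ] [DecidableEq κ],
      Matrix ι κ U → ℝ → Prop)
    (ι : Type) [Fintype ι] [DecidableEq ι] : Set (Matrix ι ι (U × ℂ)) :=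
  { X | (Matrix.of fun i j => (X i j).2).PosSemidef ∧
      ∀ ε : ℝ, 0 < ε → ∀ B : Matrix ι ι ℂ, B.PosDef →
        B * B = Matrix.of (fun i j => (X i j).2) + (ε : ℂ) • 1 →
        ∀ φ : Matrix ι ι U →ₗ[ℂ] ℂ,
          (∀ g ∈ posU ι, 0 ≤ (φ g).re ∧ (φ g).im = 0) →
          (∀ (g : Matrix ι ι U) (r : ℝ), 0 ≤ r → normU ι ι g r → ‖φ g‖ ≤ r) →
          -1 ≤ (φ (mconj B⁻¹ (Matrix.of fun i j => (X i j).1))).re }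

end Werner

section MatrixMaps

variable [AddCommGroup V] [Module ℂ V] [AddCommGroup W] [Module ℂ W]

/-- Amplification of a matrix-algebra valued map evaluated on an operator matrix. -/
def blkMat {p : Type} (φ : V →ₗ[ℂ] Matrix p p ℂ) {ι : Type} (X : Matrix ι ι V) :
    Matrix (ι × p) (ι × p) ℂ :=
  Matrix.of fun q r => φ (X q.1 r.1) q.2 r.2

/-- Unital completely positive map into a matrix algebra, for raw matrix-cone data. -/
def UCPtoM {R : Type} [AddCommGroup R] [Module ℂ R]
    (posR : ∀ (ι : Type) [Fintype ι] [DecidableEq ι], Set (Matrix ι ι R)) (uR : R)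
    {p : Type} [Fintype p] [DecidableEq p] (φ : R →ₗ[ℂ] Matrix p p ℂ) : Prop :=
  φ uR = 1 ∧ ∀ (ι : Type) [Fintype ι] [DecidableEq ι], ∀ X ∈ posR ι, (blkMat φ X).PosSemidef

/-- Completely positive map from a matrix algebra into matrix-cone data. -/
def CPfromM {p : Type} [Fintype p] [DecidableEq p]
    (posW : ∀ (ι : Type) [Fintype ι] [DecidableEq ι], Set (Matrix ι ι W))
    (ψ : Matrix p p ℂ →ₗ[ℂ] W) : Prop :=
  ∀ (ι : Type) [Fintype ι] [DecidableEq ι] (B : Matrix ι ι (Matrix p p ℂ)),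
    (Matrix.of fun (q r : ι × p) => B q.1 r.1 q.2 r.2).PosSemidef →
    (Matrix.of fun i j => ψ (B i j)) ∈ posW ι

/-- The pairing `φ ⊗ ψ : V ⊗ W → M_{p×q}` associated with matrix-algebra valued maps. -/
def kronPair {p q : Type} [Fintype p] [DecidableEq p] [Fintype q] [DecidableEq q]
    (φ : V →ₗ[ℂ] Matrix p p ℂ) (ψ : W →ₗ[ℂ] Matrix q q ℂ) :
    V ⊗[ℂ] W →ₗ[ℂ] Matrix (p × q) (p × q) ℂ :=
  TensorProduct.lift
    (LinearMap.mk₂ ℂ (fun v w => φ v ⊗ₖ ψ w)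
      (fun v v' w => by simp [map_add, Matrix.add_kronecker])
      (fun c v w => by simp [map_smul, Matrix.smul_kronecker])
      (fun v w w' => by simp [map_add, Matrix.kronecker_add])
      (fun c v w => by simp [map_smul, Matrix.kronecker_smul]))

/-- The ground level positive cone of the minimal operator system tensor product. -/
def minPos1 (posV : ∀ (ι : Type) [Fintype ι] [DecidableEq ι], Set (Matrix ι ι V)) (uV : V)
    (posW : ∀ (ι : Type) [Fintype ι] [DecidableEq ι], Set (Matrix ι ι W)) (uW : W) :
    Set (V ⊗[ℂ] W) :=
  { z | ∀ (k m : ℕ) (φ : V →ₗ[ℂ] Matrix (Fin k) (Fin k) ℂ)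
      (ψ : W →ₗ[ℂ] Matrix (Fin m) (Fin m) ℂ),
      UCPtoM posV uV φ → UCPtoM posW uW ψ → (kronPair φ ψ z).PosSemidef }

/-- The matrix level positive cones of the minimal operator system tensor product. -/
def minPosMat (posV : ∀ (ι : Type) [Fintype ι] [DecidableEq ι], Set (Matrix ι ι V)) (uV : V)
    (posW : ∀ (ι : Type) [Fintype ι] [DecidableEq ι], Set (Matrix ι ι W)) (uW : W)
    (ι : Type) [Fintype ι] [DecidableEq ι] : Set (Matrix ι ι (V ⊗[ℂ] W)) :=
  { Z | ∀ (k m : ℕ) (φ : V →ₗ[ℂ] Matrix (Fin k) (Fin k) ℂ)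
      (ψ : W →ₗ[ℂ] Matrix (Fin m) (Fin m) ℂ),
      UCPtoM posV uV φ → UCPtoM posW uW ψ →
      (Matrix.of fun (q r : ι × (Fin k × Fin m)) =>
        kronPair φ ψ (Z q.1 r.1) q.2 r.2).PosSemidef }

/-- The entry functionals of a matrix-algebra valued map. -/
def entryF {p : Type} (f : V →ₗ[ℂ] Matrix p p ℂ) (i j : p) : DualV V where
  toFun x := f x i j
  map_add' x y := by simp [map_add, Matrix.add_apply]
  map_smul' c x := by simp [map_smul, Matrix.smul_apply]

/-- Conjugation of a matrix-algebra valued map by a fixed scalar matrix. -/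
def conjMap {p : Type} [Fintype p] (B : Matrix p p ℂ) (f : V →ₗ[ℂ] Matrix p p ℂ) :
    V →ₗ[ℂ] Matrix p p ℂ where
  toFun x := B * f x * B
  map_add' x y := by simp [map_add, Matrix.mul_add, Matrix.add_mul]
  map_smul' c x := by simp [map_smul, Matrix.mul_smul, Matrix.smul_mul]

end MatrixMaps

/-- The weak expectation property, for raw matrix-cone data `(posV, uV)` on `V` :
the canonical inclusion into the bidual factors through some `B(H)`
(`H = ℓ²(Λ)`) by unital completely positive maps. -/
def HasWEP {V : Type} [AddCommGroup V] [Module ℂ V]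
    (posV : ∀ (ι : Type) [Fintype ι] [DecidableEq ι], Set (Matrix ι ι V)) (uV : V) : Prop :=
  ∃ (Λ : Type) (Φ : V →ₗ[ℂ] ((lp (fun _ : Λ => ℂ) 2) →L[ℂ] (lp (fun _ : Λ => ℂ) 2)))
    (Ψ : ((lp (fun _ : Λ => ℂ) 2) →L[ℂ] (lp (fun _ : Λ => ℂ) 2)) →ₗ[ℂ] BiDual V),
    Φ uV = 1 ∧
    (∀ (ι : Type) [Fintype ι] [DecidableEq ι], ∀ X ∈ posV ι, X.map Φ ∈ cstarPos ι) ∧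
    Ψ 1 = Module.Dual.eval ℂ V uV ∧
    (∀ (ι : Type) [Fintype ι] [DecidableEq ι],
      ∀ Y ∈ cstarPos (A := (lp (fun _ : Λ => ℂ) 2) →L[ℂ] (lp (fun _ : Λ => ℂ) 2)) ι,
        Y.map Ψ ∈ bidualPos posV ι) ∧
    (∀ x : V, Ψ (Φ x) = Module.Dual.eval ℂ V x)

end
/-- A matrix ordered operator space, as raw data: matrix cones and matrix norms. -/
structure MatOrdData (V : Type) [AddCommGroup V] [Module ℂ V] [StarAddMonoid V]
    [StarModule ℂ V] : Type 1 where
  pos : ∀ (ι : Type) [Fintype ι] [DecidableEq ι], Set (Matrix ι ι V)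
  normLE : ∀ (ι κ : Type) [Fintype ι] [DecidableEq ι] [Fintype κ] [DecidableEq κ],
    Matrix ι κ V → ℝ → Prop

/-- **Lemma (Werner).** If `T : V → W` is a completely contractive completely
positive map between matrix ordered operator spaces, then its unitization
`T̃ : Ṽ → W̃`, `x + λ1 ↦ T(x) + λ1`, is a unital completely positive map of the
Werner unitizations. -/
theorem unitization_of_ccp_is_ucp {V W : Type}
    [AddCommGroup V] [Module ℂ V] [StarAddMonoid V] [StarModule ℂ V]
    [AddCommGroup W] [Module ℂ W] [StarAddMonoid W] [StarModule ℂ W]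
    (𝒱 : MatOrdData V) (𝒲 : MatOrdData W) (T : V →ₗ[ℂ] W)
    (hstar : ∀ x, T (star x) = star (T x))
    (hcc : ∀ (ι κ : Type) [Fintype ι] [DecidableEq ι] [Fintype κ] [DecidableEq κ]
      (X : Matrix ι κ V) (r : ℝ), 𝒱.normLE ι κ X r → 𝒲.normLE ι κ (X.map T) r)
    (hcp : ∀ (ι : Type) [Fintype ι] [DecidableEq ι],
      ∀ X ∈ 𝒱.pos ι, X.map T ∈ 𝒲.pos ι) :
    (LinearMap.prodMap T (LinearMap.id (R := ℂ) (M := ℂ)))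
        ((0 : V), (1 : ℂ)) = ((0 : W), (1 : ℂ)) ∧
    ∀ (ι : Type) [Fintype ι] [DecidableEq ι],
      ∀ X ∈ wernerPos 𝒱.pos 𝒱.normLE ι,
        X.map (LinearMap.prodMap T (LinearMap.id (R := ℂ) (M := ℂ))) ∈
          wernerPos 𝒲.pos 𝒲.normLE ι  := by
  refine ⟨by simp, ?_⟩
  intro ι _ _ X hX
  obtain ⟨h2, h1⟩ := hX
  have hsnd : (Matrix.of fun i j =>
      ((X.map (LinearMap.prodMap T (LinearMap.id (R := ℂ) (M := ℂ)))) i j).2)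
      = Matrix.of fun i j => (X i j).2 := rfl
  refine ⟨by rw [hsnd]; exact h2, ?_⟩
  intro ε hε B hB hBB φ hφpos hφnorm
  set ψ : Matrix ι ι V →ₗ[ℂ] ℂ := φ.comp T.mapMatrix with hψ
  have hcomm : ∀ (α : Matrix ι ι ℂ) (Y : Matrix ι ι V),
      (mconj α Y).map T = mconj α (Y.map T) := by
    intro α Y
    ext i j
    simp [mconj, Matrix.map_apply, map_sum, map_smul]
  have key := h1 ε hε B hB (by rw [← hsnd]; exact hBB) ψ ?_ ?_
  · have : ψ (mconj B⁻¹ (Matrix.of fun i j => (X i j).1))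
        = φ (mconj B⁻¹ (Matrix.of fun i j =>
            ((X.map (LinearMap.prodMap T (LinearMap.id (R := ℂ) (M := ℂ)))) i j).1)) := by
      simp only [hψ, LinearMap.comp_apply, LinearMap.mapMatrix_apply]
      rw [hcomm]
      rfl
    rw [← this]
    exact key
  · intro g hg
    exact hφpos (g.map T) (hcp ι g hg)
  · intro g r hr hgr
    exact hφnorm (g.map T) r hr (hcc ι ι g r hgr)
end

section
/- Let S be an operator system, E a finite-dimensional operator system with Archimedean matrix order unit on its dual E* (so E* is an operator system), and Φ : S → E a unital completely positive map. Then the functional φ on S ⊗_max E* defined by φ(x ⊗ f) = f(Φ(x)) is positive. -/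
open scoped TensorProduct Kronecker ComplexOrder Matrix

/-- **Lemma (cf. [KPTT1, Lemma 5.7]).** Let `S` be an operator system, `E` a finite
dimensional operator system whose dual `E*` is endowed with a (non-canonical)
Archimedean matrix order unit making it an operator system `𝒟`, and `Φ : S → E` a
unital completely positive map.  Then the functional `φ` on `S ⊗_max E*` given by
`φ(x ⊗ f) = f(Φ(x))` is positive. -/
theorem pairing_functional_positive {V E : Type}
    [AddCommGroup V] [Module ℂ V] [StarAddMonoid V] [StarModule ℂ V]
    [AddCommGroup E] [Module ℂ E] [StarAddMonoid E] [StarModule ℂ E]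
    [FiniteDimensional ℂ E]
    [StarAddMonoid (DualV E)] [StarModule ℂ (DualV E)]
    (hst : ∀ (g : DualV E) (x : E), (star g) x = star (g (star x)))
    (𝒮 : OpSys V) (ℰ : OpSys E) (𝒟 : OpSys (DualV E))
    (hdual : ∀ (ι : Type) [Fintype ι] [DecidableEq ι], 𝒟.pos ι = dualPos ℰ.pos ι)
    (Φ : V →ₗ[ℂ] E) (hΦ : IsUCPmap 𝒮 ℰ Φ) :
    ∀ z ∈ maxPos1 𝒮.pos 𝒮.unit 𝒟.pos 𝒟.unit,
      0 ≤ ((TensorProduct.lift ((Module.Dual.eval ℂ E).comp Φ)) z).re ∧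
        ((TensorProduct.lift ((Module.Dual.eval ℂ E).comp Φ)) z).im = 0 := by
  intro z hz
  set L := TensorProduct.lift ((Module.Dual.eval ℂ E).comp Φ) with hLdef
  have main : ∀ W : Matrix (Fin 1) (Fin 1) (V ⊗[ℂ] DualV E),
      W ∈ Dmax 𝒮.pos 𝒟.pos (Fin 1) → 0 ≤ L (W 0 0) := by
    rintro W ⟨k, l, P, Q, α, hP, hQ, rfl⟩
    rw [hdual] at hQ
    have hPΦ : (P.map Φ) ∈ ℰ.pos (Fin k) := hΦ.2 _ P hP
    have hM : (ampMat Q (P.map Φ)).PosSemidef := hQ _ _ hPΦ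
    set x : Fin k × Fin l → ℂ := fun q => star (α 0 q) with hx
    have hps := hM.dotProduct_mulVec_nonneg x
    have calc1 : L ((mconj α (tkron P Q)) 0 0)
        = ∑ p : Fin k × Fin l, ∑ q : Fin k × Fin l,
            (α 0 p * star (α 0 q)) * (Q p.2 q.2 (Φ (P p.1 q.1))) := by
      simp only [mconj, Matrix.of_apply, map_sum, map_smul, smul_eq_mul, tkron,
        hLdef, TensorProduct.lift.tmul, LinearMap.coe_comp, Function.comp_apply,
        Module.Dual.eval_apply]
    have calc2 : star x ⬝ᵥ (ampMat Q (P.map Φ)) *ᵥ x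
        = ∑ p : Fin k × Fin l, ∑ q : Fin k × Fin l,
            (α 0 p * star (α 0 q)) * (Q p.2 q.2 (Φ (P p.1 q.1))) := by
      simp only [dotProduct, Matrix.mulVec, Pi.star_apply, hx, star_star,
        ampMat, Matrix.of_apply, Matrix.map_apply, Finset.mul_sum]
      refine Finset.sum_congr rfl fun p _ => Finset.sum_congr rfl fun q _ => ?_
      ring
    rw [calc1, ← calc2]
    exact hps
  set c := L (𝒮.unit ⊗ₜ[ℂ] 𝒟.unit) with hc
  have hε : ∀ ε : ℝ, 0 < ε → 0 ≤ L z + (ε : ℂ) * c := by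
    intro ε hε'
    have h := hz ε hε'
    have h2 := main _ h
    have hentry : ((Matrix.of (fun _ _ : Fin 1 => z)
        + (ε : ℂ) • Matrix.diagonal (fun _ => 𝒮.unit ⊗ₜ[ℂ] 𝒟.unit) :
        Matrix (Fin 1) (Fin 1) (V ⊗[ℂ] DualV E))) 0 0
        = z + (ε : ℂ) • (𝒮.unit ⊗ₜ[ℂ] 𝒟.unit) := by
      simp [Matrix.add_apply, Matrix.diagonal_apply_eq]
    rw [hentry] at h2
    simpa [map_add, map_smul, smul_eq_mul, hc] using h2
  have hkey : ∀ ε : ℝ, 0 < ε →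
      0 ≤ (L z).re + ε * c.re ∧ (L z).im + ε * c.im = 0 := by
    intro ε hε'
    have h := hε ε hε'
    rw [Complex.le_def] at h
    constructor
    · have := h.1
      simpa [Complex.add_re, Complex.mul_re] using this
    · have := h.2.symm
      simpa [Complex.add_im, Complex.mul_im] using this
  have him1 := (hkey 1 one_pos).2
  have him2 := (hkey 2 two_pos).2
  have him : (L z).im = 0 := by linarith
  refine ⟨?_, him⟩
  by_contra hcon
  push_neg at hcon
  rcases le_or_gt c.re 0 with h | h
  · have := (hkey 1 one_pos).1
    linarith
  · have hδ : 0 < -(L z).re / (2 * c.re) := div_pos (by linarith) (by linarith)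
    have h3 := (hkey _ hδ).1
    have h4 : -(L z).re / (2 * c.re) * c.re = -(L z).re / 2 := by
      field_simp
    rw [h4] at h3
    linarith
end

section
/- Let Φ : S → T be a completely positive map between operator systems that factors as Φ = ψ ∘ φ with φ : S → M_p and ψ : M_p → T completely positive. Then the element of S* ⊗ T corresponding to Φ lies in the cone { α(f ⊗ Q)α* : α ∈ M_{1,pq}, f ∈ M_p(S*)^+, Q ∈ M_q(T)^+ }, and in particular Φ belongs to (S̃* ⊗_max T)^+. -/
open scoped TensorProduct Kronecker ComplexOrder Matrix

section Helpers

variable {V W : Type} [AddCommGroup V] [Module ℂ V] [AddCommGroup W] [Module ℂ W]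

/-- A rank-one matrix `v v*` is positive semidefinite. -/
lemma psd_rank_one {n : Type} [Fintype n] (v : n → ℂ) :
    (Matrix.of fun i j => v i * star (v j)).PosSemidef := by
  rw [Matrix.posSemidef_iff_dotProduct_mulVec]
  constructor
  · ext i j
    simp [Matrix.conjTranspose_apply, mul_comm]
  · intro x
    have h : dotProduct (star x)
        ((Matrix.of fun i j => v i * star (v j)) *ᵥ x)
        = star (∑ j, star (v j) * x j) * (∑ j, star (v j) * x j) := by
      rw [show star (∑ j, star (v j) * x j) = ∑ j, star (x j) * v j by
        simp only [star_sum, star_mul, star_star]]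
      rw [Finset.sum_mul_sum]
      simp only [dotProduct, Matrix.mulVec, Matrix.of_apply, Pi.star_apply,
        Finset.mul_sum]
      refine Finset.sum_congr rfl fun i _ => ?_
      refine Finset.sum_congr rfl fun j _ => ?_
      ring
    rw [h]
    exact star_mul_self_nonneg _

/-- The dual matrix cones are closed under conjugation by scalar matrices. -/
lemma dualPos_mconj (posV : ∀ (ι : Type) [Fintype ι] [DecidableEq ι], Set (Matrix ι ι V))
    {ι κ : Type} [Fintype ι] [DecidableEq ι] [Fintype κ] [DecidableEq κ]
    (α : Matrix κ ι ℂ) {f : Matrix ι ι (DualV V)} (hf : f ∈ dualPos posV ι) :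
    mconj α f ∈ dualPos posV κ := by
  intro m _ _ X hX
  have hM := hf m X hX
  have key : ampMat (mconj α f) X =
      (Matrix.of fun (q : m × κ) (r : m × ι) => if q.1 = r.1 then α q.2 r.2 else 0) *
        ampMat f X *
      (Matrix.of fun (q : m × κ) (r : m × ι) => if q.1 = r.1 then α q.2 r.2 else 0)ᴴ := by
    ext ⟨a, i⟩ ⟨b, j⟩
    simp only [ampMat, mconj, Matrix.of_apply, Matrix.mul_apply,
      Matrix.conjTranspose_apply, LinearMap.coe_sum, Finset.sum_apply,
      LinearMap.smul_apply, smul_eq_mul, Fintype.sum_prod_type]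
    simp only [ite_mul, zero_mul, mul_ite, mul_zero, apply_ite (star : ℂ → ℂ), star_zero]
    simp only [Finset.sum_ite_irrel, Finset.sum_const_zero, Finset.sum_ite_eq,
      Finset.mem_univ, if_true]
    rw [Finset.sum_comm]
    simp only [Finset.sum_mul]
    exact Finset.sum_congr rfl fun k _ => Finset.sum_congr rfl fun l _ => by ring
  rw [key]
  exact hM.mul_mul_conjTranspose_same _

/-- Conjugating by the row vector selecting diagonal pairs. -/
lemma mconj_diag_selector {n : Type} [Fintype n] [DecidableEq n]
    (X : Matrix (n × n) (n × n) V) :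
    mconj (Matrix.of fun (_ : Fin 1) (k : n × n) => if k.1 = k.2 then (1 : ℂ) else 0) X 0 0
      = ∑ a : n, ∑ b : n, X (a, a) (b, b) := by
  simp only [mconj, Matrix.of_apply, Fintype.sum_prod_type]
  simp only [ite_mul, zero_mul, one_mul, apply_ite (star : ℂ → ℂ), star_one, star_zero, mul_ite,
    mul_zero, mul_one, ite_smul, zero_smul, one_smul]
  rw [Finset.sum_comm]
  simp [Finset.sum_ite_eq, Finset.sum_ite_eq']

/-- The inclusion matrix `Fin p → Fin (p+1)`. -/
def inclM (p : ℕ) : Matrix (Fin (p+1)) (Fin p) ℂ :=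
  Matrix.of fun i k => if i = k.castSucc then 1 else 0

lemma mconj_inclM_castSucc {p : ℕ} (M : Matrix (Fin p) (Fin p) V) (a b : Fin p) :
    mconj (inclM p) M a.castSucc b.castSucc = M a b := by
  simp only [mconj, inclM, Matrix.of_apply, Fin.castSucc_inj]
  simp [ite_mul, apply_ite (star : ℂ → ℂ), mul_ite, ite_smul, Finset.sum_ite_eq, Finset.sum_ite_eq']

lemma mconj_inclM_last_left {p : ℕ} (M : Matrix (Fin p) (Fin p) V) (j : Fin (p+1)) :
    mconj (inclM p) M (Fin.last p) j = 0 := by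
  simp only [mconj, inclM, Matrix.of_apply]
  have : ∀ k : Fin p, (Fin.last p = k.castSucc) = False := by
    intro k; simp [(Fin.castSucc_lt_last k).ne']
  simp [this]

lemma mconj_inclM_last_right {p : ℕ} (M : Matrix (Fin p) (Fin p) V) (i : Fin (p+1)) :
    mconj (inclM p) M i (Fin.last p) = 0 := by
  simp only [mconj, inclM, Matrix.of_apply]
  have : ∀ k : Fin p, (Fin.last p = k.castSucc) = False := by
    intro k; simp [(Fin.castSucc_lt_last k).ne']
  simp [this]

/-- The column matrix supported at the last index. -/
def lastColM (p : ℕ) (c : ℂ) : Matrix (Fin (p+1)) (Fin 1) ℂ :=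
  Matrix.of fun i _ => if i = Fin.last p then c else 0

lemma mconj_lastColM {p : ℕ} (c : ℂ) (M : Matrix (Fin 1) (Fin 1) V) (i j : Fin (p+1)) :
    mconj (lastColM p c) M i j =
      if i = Fin.last p ∧ j = Fin.last p then (c * star c) • M 0 0 else 0 := by
  simp only [mconj, lastColM, Matrix.of_apply, Fin.sum_univ_one]
  split_ifs with h1 <;> simp_all

end Helpers

/-- **Remark after Theorem 5.3.** A completely positive map `Φ : S → T` factoring
through a matrix algebra `M_p` in a completely positive way corresponds to an
element of the subcone `{ α (f ⊗ Q) α* : f ∈ M_p(S*)⁺, Q ∈ M_q(T)⁺ }` of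
`S* ⊗ T ∩ (S̃* ⊗_max T)⁺`. -/
theorem cp_factorization_in_subcone {V W : Type}
    [AddCommGroup V] [Module ℂ V] [StarAddMonoid V] [StarModule ℂ V]
    [AddCommGroup W] [Module ℂ W] [StarAddMonoid W] [StarModule ℂ W]
    (𝒮 : OpSys V) (𝒯 : OpSys W) (Φ : V →ₗ[ℂ] W)
    (p : ℕ) (φ : V →ₗ[ℂ] Matrix (Fin p) (Fin p) ℂ)
    (ψ : Matrix (Fin p) (Fin p) ℂ →ₗ[ℂ] W)
    (hφ : ∀ (ι : Type) [Fintype ι] [DecidableEq ι],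
      ∀ X ∈ 𝒮.pos ι, (blkMat φ X).PosSemidef)
    (hψ : CPfromM 𝒯.pos ψ)
    (hfac : ∀ x, Φ x = ψ (φ x)) :
    ∃ z : DualV V ⊗[ℂ] W,
      (∃ (q : ℕ) (f : Fin q → DualV V) (y : Fin q → W),
        z = ∑ i, f i ⊗ₜ[ℂ] y i ∧ ∀ x, Φ x = ∑ i, f i x • y i) ∧
      (∃ (q : ℕ) (F : Matrix (Fin p) (Fin p) (DualV V))
        (Q : Matrix (Fin q) (Fin q) W) (α : Matrix (Fin 1) (Fin p × Fin q) ℂ),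
        F ∈ dualPos 𝒮.pos (Fin p) ∧ Q ∈ 𝒯.pos (Fin q) ∧
        z = mconj α (tkron F Q) 0 0) ∧
      (TensorProduct.map (LinearMap.inl ℂ (DualV V) ℂ)
          (LinearMap.id (R := ℂ) (M := W))) z ∈
        maxPos1 (wernerPos (dualPos 𝒮.pos) (dualNormLE 𝒮.normData))
          ((0 : DualV V), (1 : ℂ)) 𝒯.pos 𝒯.unit := by
  classical
  set Fm : Matrix (Fin p) (Fin p) (DualV V) := Matrix.of fun i j => entryF φ i j with hFm
  set Qm : Matrix (Fin p) (Fin p) W :=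
    Matrix.of fun i j => ψ (Matrix.single i j 1) with hQm
  have hF : Fm ∈ dualPos 𝒮.pos (Fin p) := by
    intro m _ _ X hX
    have h := hφ m X hX
    have : ampMat Fm X = blkMat φ X := by ext ⟨a, i⟩ ⟨b, j⟩; rfl
    rw [this]; exact h
  have hQ : Qm ∈ 𝒯.pos (Fin p) := by
    have hpsd : (Matrix.of fun (q r : Fin p × Fin p) =>
        ((Matrix.of fun i j => Matrix.single i j (1 : ℂ)) q.1 r.1) q.2 r.2).PosSemidef := by
      have h := psd_rank_one (fun q : Fin p × Fin p => if q.1 = q.2 then (1 : ℂ) else 0)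
      have he : (Matrix.of fun (q r : Fin p × Fin p) =>
          ((Matrix.of fun i j => Matrix.single i j (1 : ℂ)) q.1 r.1) q.2 r.2)
          = Matrix.of fun (q r : Fin p × Fin p) =>
            (if q.1 = q.2 then (1 : ℂ) else 0) * star (if r.1 = r.2 then (1 : ℂ) else 0) := by
        ext ⟨a, i⟩ ⟨b, j⟩
        by_cases h1 : a = i <;> by_cases h2 : b = j <;>
          simp [Matrix.single, h1, h2, eq_comm]
      rw [he]; exact h
    exact hψ (Fin p) (Matrix.of fun i j => Matrix.single i j 1) hpsd
  refine ⟨∑ a : Fin p, ∑ b : Fin p,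
    (entryF φ a b) ⊗ₜ[ℂ] ψ (Matrix.single a b 1), ?_, ?_, ?_⟩
  · -- bullet 1
    refine ⟨p * p,
      fun i => entryF φ (finProdFinEquiv.symm i).1 (finProdFinEquiv.symm i).2,
      fun i => ψ (Matrix.single (finProdFinEquiv.symm i).1
        (finProdFinEquiv.symm i).2 1), ?_, ?_⟩
    · rw [show (∑ i : Fin (p * p),
          entryF φ (finProdFinEquiv.symm i).1 (finProdFinEquiv.symm i).2 ⊗ₜ[ℂ]
            ψ (Matrix.single (finProdFinEquiv.symm i).1 (finProdFinEquiv.symm i).2 1))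
          = ∑ x : Fin p × Fin p,
            entryF φ x.1 x.2 ⊗ₜ[ℂ] ψ (Matrix.single x.1 x.2 1) from
        Equiv.sum_comp finProdFinEquiv.symm (fun x : Fin p × Fin p =>
          entryF φ x.1 x.2 ⊗ₜ[ℂ] ψ (Matrix.single x.1 x.2 1))]
      rw [Fintype.sum_prod_type]
    · intro x
      have h1 : φ x = ∑ a : Fin p, ∑ b : Fin p,
          (φ x a b) • Matrix.single a b (1 : ℂ) := by
        conv_lhs => rw [Matrix.matrix_eq_sum_single (φ x)]
        refine Finset.sum_congr rfl fun a _ => Finset.sum_congr rfl fun b _ => ?_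
        rw [Matrix.smul_single, smul_eq_mul, mul_one]
      rw [hfac, h1, map_sum]
      rw [show (∑ i : Fin (p * p),
          entryF φ (finProdFinEquiv.symm i).1 (finProdFinEquiv.symm i).2 x •
            ψ (Matrix.single (finProdFinEquiv.symm i).1 (finProdFinEquiv.symm i).2 1))
          = ∑ q : Fin p × Fin p,
            entryF φ q.1 q.2 x • ψ (Matrix.single q.1 q.2 1) from
        Equiv.sum_comp finProdFinEquiv.symm (fun q : Fin p × Fin p =>
          entryF φ q.1 q.2 x • ψ (Matrix.single q.1 q.2 1))]
      rw [Fintype.sum_prod_type]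
      refine Finset.sum_congr rfl fun a _ => ?_
      rw [map_sum]
      refine Finset.sum_congr rfl fun b _ => ?_
      rw [map_smul]
      rfl
  · -- bullet 2
    refine ⟨p, Fm, Qm,
      Matrix.of fun (_ : Fin 1) (k : Fin p × Fin p) => if k.1 = k.2 then (1 : ℂ) else 0,
      hF, hQ, ?_⟩
    rw [mconj_diag_selector (tkron Fm Qm)]
    rfl
  · -- bullet 3
    simp only [maxPos1, maxPos, Set.mem_setOf_eq, map_sum, TensorProduct.map_tmul]
    intro ε hε
    set P' : Matrix (Fin (p + 1)) (Fin (p + 1)) (DualV V × ℂ) :=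
      Matrix.of fun i j => (mconj (inclM p) Fm i j,
        if i = Fin.last p ∧ j = Fin.last p then (1 : ℂ) else 0) with hP'
    set Q' : Matrix (Fin (p + 1)) (Fin (p + 1)) W :=
      mconj (inclM p) Qm +
        mconj (lastColM p (Real.sqrt ε : ℂ)) (Matrix.diagonal fun _ => 𝒯.unit) with hQ'
    have hQ'pos : Q' ∈ 𝒯.pos (Fin (p + 1)) :=
      𝒯.pos_add _ _ _ (𝒯.pos_conj _ _ _ _ hQ) (𝒯.pos_conj _ _ _ _ (𝒯.unit_pos _))
    have hP'pos : P' ∈ wernerPos (dualPos 𝒮.pos) (dualNormLE 𝒮.normData) (Fin (p + 1)) := by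
      constructor
      · have he : (Matrix.of fun i j => (P' i j).2) =
            Matrix.of fun i j => (if i = Fin.last p then (1 : ℂ) else 0) *
              star (if j = Fin.last p then (1 : ℂ) else 0) := by
          ext i j
          by_cases h1 : i = Fin.last p <;> by_cases h2 : j = Fin.last p <;>
            simp [hP', h1, h2]
        rw [he]; exact psd_rank_one _
      · intro ε' hε' B hB hBB φ' hφpos hφnorm
        have h1 : Matrix.of (fun i j => (P' i j).1) = mconj (inclM p) Fm := by
          ext i j; rfl
        have h2 : mconj B⁻¹ (Matrix.of fun i j => (P' i j).1) ∈
            dualPos 𝒮.pos (Fin (p + 1)) := by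
          rw [h1]; exact dualPos_mconj _ _ (dualPos_mconj _ _ hF)
        have := (hφpos _ h2).1
        linarith
    refine ⟨p + 1, p + 1, P', Q',
      Matrix.of fun (_ : Fin 1) (k : Fin (p + 1) × Fin (p + 1)) =>
        if k.1 = k.2 then (1 : ℂ) else 0, hP'pos, hQ'pos, ?_⟩
    have key : ∀ a b : Fin (p + 1), tkron P' Q' (a, a) (b, b) = P' a b ⊗ₜ[ℂ] Q' a b :=
      fun a b => rfl
    have eP1 : ∀ a b : Fin p, P' a.castSucc b.castSucc = ((Fm a b : DualV V), (0 : ℂ)) := by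
      intro a b
      simp only [hP', Matrix.of_apply, mconj_inclM_castSucc]
      rw [if_neg]
      rintro ⟨h1, -⟩
      exact (Fin.castSucc_lt_last a).ne h1
    have eP2 : ∀ b : Fin (p + 1), P' (Fin.last p) b =
        ((0 : DualV V), if b = Fin.last p then (1 : ℂ) else 0) := by
      intro b
      simp only [hP', Matrix.of_apply, mconj_inclM_last_left, true_and]
    have eP3 : ∀ a : Fin p, P' a.castSucc (Fin.last p) = (0 : DualV V × ℂ) := by
      intro a
      simp only [hP', Matrix.of_apply, mconj_inclM_last_right]
      rw [if_neg]
      · rfl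
      rintro ⟨h1, -⟩
      exact (Fin.castSucc_lt_last a).ne h1
    have eP2' : ∀ b : Fin p, P' (Fin.last p) b.castSucc = (0 : DualV V × ℂ) := by
      intro b
      simp only [hP', Matrix.of_apply, mconj_inclM_last_left]
      rw [if_neg]
      · rfl
      rintro ⟨-, h1⟩
      exact (Fin.castSucc_lt_last b).ne h1
    have eQ1 : ∀ a b : Fin p, Q' a.castSucc b.castSucc = Qm a b := by
      intro a b
      simp only [hQ', Matrix.add_apply, mconj_inclM_castSucc, mconj_lastColM]
      rw [if_neg, add_zero]
      rintro ⟨h1, -⟩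
      exact (Fin.castSucc_lt_last a).ne h1
    have eQ4 : Q' (Fin.last p) (Fin.last p) = (ε : ℂ) • 𝒯.unit := by
      simp only [hQ', Matrix.add_apply, mconj_inclM_last_left, mconj_lastColM,
        Matrix.zero_apply, zero_add, and_self, if_true, Matrix.diagonal_apply_eq]
      rw [Complex.star_def, Complex.conj_ofReal, ← Complex.ofReal_mul,
        Real.mul_self_sqrt hε.le]
    have hsum : mconj (Matrix.of fun (_ : Fin 1) (k : Fin (p + 1) × Fin (p + 1)) =>
          if k.1 = k.2 then (1 : ℂ) else 0) (tkron P' Q') 0 0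
        = (∑ a : Fin p, ∑ b : Fin p,
            (((Fm a b : DualV V), (0 : ℂ)) : DualV V × ℂ) ⊗ₜ[ℂ] Qm a b)
          + (ε : ℂ) • ((((0 : DualV V), (1 : ℂ)) : DualV V × ℂ) ⊗ₜ[ℂ] 𝒯.unit) := by
      rw [mconj_diag_selector (tkron P' Q')]
      simp only [key]
      rw [Fin.sum_univ_castSucc]
      have h1 : ∀ a : Fin p, (∑ b : Fin (p + 1), P' a.castSucc b ⊗ₜ[ℂ] Q' a.castSucc b)
          = ∑ b : Fin p, (((Fm a b : DualV V), (0 : ℂ)) : DualV V × ℂ) ⊗ₜ[ℂ] Qm a b := by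
        intro a
        rw [Fin.sum_univ_castSucc, eP3 a, TensorProduct.zero_tmul, add_zero]
        exact Finset.sum_congr rfl fun b _ => by rw [eP1, eQ1]
      have h2 : (∑ b : Fin (p + 1), P' (Fin.last p) b ⊗ₜ[ℂ] Q' (Fin.last p) b)
          = (ε : ℂ) • ((((0 : DualV V), (1 : ℂ)) : DualV V × ℂ) ⊗ₜ[ℂ] 𝒯.unit) := by
        rw [Fin.sum_univ_castSucc]
        simp only [eP2', TensorProduct.zero_tmul, Finset.sum_const_zero, zero_add]
        rw [eP2, if_pos rfl, eQ4, TensorProduct.tmul_smul]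
      rw [Finset.sum_congr rfl fun a _ => h1 a, h2]
    ext i j
    have hi : i = 0 := Subsingleton.elim i 0
    have hj : j = 0 := Subsingleton.elim j 0
    subst hi; subst hj
    simp only [Matrix.add_apply, Matrix.smul_apply, Matrix.diagonal_apply_eq,
      Matrix.of_apply, LinearMap.inl_apply, LinearMap.id_coe, id_eq]
    rw [hsum]
    rfl
end
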